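/- Let ε: {0,...,p-1} → ℤ be the Alexander grading of the two-bridge knot K(p,q) (ε(0) chosen so that ε(i) + ε(p-1-i) = 0), and let n_k = #{i : ε(i) = k}. Then the polynomial Δ(t) = (-1)^{ε(0)} Σ_k n_k (-t)^k satisfies Δ(1) = ±1 and Δ(t) = Δ(t^{-1}) (as a Laurent polynomial), i.e. n_k counted with sign (-1)^k is symmetric: n_k = n_{-k} for all k. -/
import Mathlib

lemma negOnePow_natAbs_aux (a : ℤ) :
    (-1 : ℤ) ^ a.natAbs = if Even a then 1 else -1 := by
  rcases Int.even_or_odd a with h | h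
  · rw [if_pos h]
    exact (Int.natAbs_even.mpr h).neg_one_pow
  · rw [if_neg (Int.not_even_iff_odd.mpr h)]
    exact (Int.natAbs_odd.mpr h).neg_one_pow

lemma negOnePow_natAbs_add_odd (a c : ℤ) (hc : Odd c) :
    (-1 : ℤ) ^ (a + c).natAbs = -(-1 : ℤ) ^ a.natAbs := by
  rw [negOnePow_natAbs_aux, negOnePow_natAbs_aux]
  rcases Int.even_or_odd a with h | h
  · rw [if_pos h, if_neg (Int.not_even_iff_odd.mpr (h.add_odd hc))]
  · rw [if_neg (Int.not_even_iff_odd.mpr h), if_pos (h.add_odd hc)]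
    ring

/-- For the Alexander grading `ε` of the two-bridge knot `K(p,q)`, normalized so that
`ε i = -ε (p-1-i)`, the polynomial `Δ(t) = (-1)^{ε 0} ∑_k n_k (-t)^k` satisfies
`Δ(1) = ±1` (equivalently, the signed count `(-1)^{ε 0} ∑_i (-1)^{ε i} = ±1`), and the
counts `n_k = #{i : ε i = k}` are symmetric: `n_k = n_{-k}`. -/
theorem stmt9 (p q : ℕ) (hp : Odd p) (hq0 : 0 < q) (hqp : q < p)
    (hcop : Nat.Coprime p q) (ε : ℕ → ℤ)
    (hεs : ∀ i, i < p - 1 → ε (i + 1) = ε i + (-1 : ℤ) ^ (i * q / p))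
    (hnorm : ∀ i, i < p → ε i = -ε (p - 1 - i))
    (n : ℤ → ℕ)
    (hn : ∀ k, n k = ((Finset.range p).filter (fun i => ε i = k)).card) :
    ((-1 : ℤ) ^ (ε 0).natAbs * ∑ i ∈ Finset.range p, (-1 : ℤ) ^ (ε i).natAbs = 1 ∨
     (-1 : ℤ) ^ (ε 0).natAbs * ∑ i ∈ Finset.range p, (-1 : ℤ) ^ (ε i).natAbs = -1) ∧
    ∀ k : ℤ, n k = n (-k) := by
  constructor
  · left
    have key : ∀ i, i < p → (-1 : ℤ) ^ (ε i).natAbs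
        = (-1 : ℤ) ^ i * (-1 : ℤ) ^ (ε 0).natAbs := by
      intro i hi
      induction i with
      | zero => simp
      | succ m ih =>
        have hm : m < p - 1 := by omega
        rw [hεs m hm, negOnePow_natAbs_add_odd _ _ ((odd_neg_one (α := ℤ)).pow),
          ih (by omega)]
        ring
    have hsum : ∑ i ∈ Finset.range p, (-1 : ℤ) ^ (ε i).natAbs
        = (∑ i ∈ Finset.range p, (-1 : ℤ) ^ i) * (-1 : ℤ) ^ (ε 0).natAbs := by
      rw [Finset.sum_mul]
      exact Finset.sum_congr rfl fun i hi => key i (Finset.mem_range.mp hi)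
    have hgeom : (∑ i ∈ Finset.range p, (-1 : ℤ) ^ i) = 1 := by
      rw [neg_one_geom_sum, if_neg (Nat.not_even_iff_odd.mpr hp)]
    rw [hsum, hgeom, one_mul, ← pow_add]
    exact Even.neg_one_pow ⟨(ε 0).natAbs, rfl⟩
  · intro k
    rw [hn k, hn (-k)]
    apply Finset.card_bij (fun i _ => p - 1 - i)
    · intro i hi
      simp only [Finset.mem_filter, Finset.mem_range] at hi ⊢
      have h1 := hnorm i hi.1
      exact ⟨by omega, by linarith [hi.2]⟩
    · intro i hi j hj hij
      simp only [Finset.mem_filter, Finset.mem_range] at hi hj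
      omega
    · intro j hj
      simp only [Finset.mem_filter, Finset.mem_range] at hj
      refine ⟨p - 1 - j, ?_, by omega⟩
      simp only [Finset.mem_filter, Finset.mem_range]
      have h1 := hnorm (p - 1 - j) (by omega)
      rw [show p - 1 - (p - 1 - j) = j by omega] at h1
      exact ⟨by omega, by linarith [hj.2]⟩
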